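/- Let 1 ≤ p_i ≤ u_i < ∞ or p_i = u_i = ∞, i = 1,2, and j ∈ ℕ₀. If (p₁ ≤ p₂ and u₂ ≤ u₁), or (p₁ > p₂ and p₁/u₁ ≤ p₂/u₂), or p₁ = u₁ = ∞, then the nuclear norm of the identity map between the finite Morrey sequence spaces equals the dimension: ν(id_j: m^{2^{jd}}_{u₁,p₁} → m^{2^{jd}}_{u₂,p₂}) = 2^{jd}. -/

import Mathlib

open scoped ENNReal

/-- The index set `𝒦_j = {k ∈ ℤ^d : Q_{0,k} ⊆ Q_{-j,0}}`, identified with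
`(Fin d → Fin (2^j))` (the unit cubes inside the cube `[0, 2^j)^d`). -/
abbrev MorreyIdx (d j : ℕ) := Fin d → Fin (2 ^ j)

/-- `Q_{0,k} ⊆ Q_{-ν,m}` for a dyadic cube `Q_{-ν,m} ⊆ Q_{-j,0}` of side length `2^ν`,
where the cube is encoded by `m : Fin d → Fin (2^(j-ν))`: the condition is
`k i / 2^ν = m i` for all `i`. -/
def memSubcube {d j : ℕ} (ν : ℕ) (m : Fin d → ℕ) (k : MorreyIdx d j) : Prop :=
  ∀ i, (k i : ℕ) / 2 ^ ν = m i

instance {d j : ℕ} (ν : ℕ) (m : Fin d → ℕ) (k : MorreyIdx d j) :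
    Decidable (memSubcube ν m k) := by unfold memSubcube; infer_instance

/-- The norm of the finite-dimensional Morrey sequence space `m^{2^{jd}}_{u,p}`
for `0 < p ≤ u < ∞` or `p = u = ∞` (parameters in `ℝ≥0∞`); for `p = u = ∞` this is
the sup-norm of `ℓ∞^{2^{jd}}`.  For finite parameters,
`‖λ‖ = max_{ν ≤ j, Q_{-ν,m} ⊆ Q_{-j,0}} |Q_{-ν,m}|^{1/u - 1/p}
   (∑_{k : Q_{0,k} ⊆ Q_{-ν,m}} |λ_k|^p)^{1/p}`, with `|Q_{-ν,m}| = 2^{νd}`. -/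
noncomputable def mNorm (d j : ℕ) (u p : ℝ≥0∞) (lam : MorreyIdx d j → ℂ) : ℝ :=
  if p = ∞ then ⨆ k : MorreyIdx d j, ‖lam k‖
  else
    ⨆ ν : Fin (j + 1), ⨆ m : Fin d → Fin (2 ^ (j - (ν : ℕ))),
      (2 : ℝ) ^ ((((ν : ℕ) * d : ℕ) : ℝ) * (1 / u.toReal - 1 / p.toReal)) *
        (∑ k : MorreyIdx d j,
          if memSubcube (ν : ℕ) (fun i => (m i : ℕ)) k then ‖lam k‖ ^ p.toReal else 0)
          ^ (1 / p.toReal)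

/-- The dual norm of a functional `λ ↦ ∑_k f_k λ_k` on `(ℂ^{𝒦_j}, N)`. -/
noncomputable def mDualNorm (d j : ℕ) (N : (MorreyIdx d j → ℂ) → ℝ)
    (f : MorreyIdx d j → ℂ) : ℝ :=
  sInf {C : ℝ | 0 ≤ C ∧ ∀ lam : MorreyIdx d j → ℂ, ‖∑ k, f k * lam k‖ ≤ C * N lam}

/-- A nuclear representation of the identity map `(ℂ^{𝒦_j}, N₁) → (ℂ^{𝒦_j}, N₂)`:
functionals `a n` (given by their coefficient vectors, measured in the dual norm of
`N₁`) and vectors `y n` (measured in `N₂`) with summable norm products, reproducing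
every `λ` as `λ = ∑_n (∑_i a_{n,i} λ_i) y_n`. -/
def IsNuclearRepIdM (d j : ℕ) (N₁ N₂ : (MorreyIdx d j → ℂ) → ℝ)
    (a y : ℕ → MorreyIdx d j → ℂ) : Prop :=
  Summable (fun n => mDualNorm d j N₁ (a n) * N₂ (y n)) ∧
  ∀ (lam : MorreyIdx d j → ℂ) (k : MorreyIdx d j),
    HasSum (fun n => (∑ i, a n i * lam i) * y n k) (lam k)

/-- The nuclear norm of the identity map `(ℂ^{𝒦_j}, N₁) → (ℂ^{𝒦_j}, N₂)`:
the infimum of `∑_n ‖a n‖_{N₁'} ‖y n‖_{N₂}` over all nuclear representations. -/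
noncomputable def nucNormIdM (d j : ℕ) (N₁ N₂ : (MorreyIdx d j → ℂ) → ℝ) : ℝ :=
  sInf {c : ℝ | ∃ a y, IsNuclearRepIdM d j N₁ N₂ a y ∧
    c = ∑' n, mDualNorm d j N₁ (a n) * N₂ (y n)}


section Aux

open Finset

variable {d j : ℕ}

instance : Nonempty (MorreyIdx d j) := ⟨fun _ => ⟨0, pow_pos two_pos j⟩⟩

instance (n : ℕ) : NeZero (2 ^ n) := ⟨(pow_pos two_pos n).ne'⟩

/-- A single term in the Morrey norm (finite `p`). -/
noncomputable def mTerm (d j : ℕ) (u p : ℝ≥0∞) (lam : MorreyIdx d j → ℂ)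
    (ν : Fin (j + 1)) (m : Fin d → Fin (2 ^ (j - (ν : ℕ)))) : ℝ :=
  (2 : ℝ) ^ ((((ν : ℕ) * d : ℕ) : ℝ) * (1 / u.toReal - 1 / p.toReal)) *
    (∑ k : MorreyIdx d j,
      if memSubcube (ν : ℕ) (fun i => (m i : ℕ)) k then ‖lam k‖ ^ p.toReal else 0)
      ^ (1 / p.toReal)

lemma mNorm_eq_iSup {u p : ℝ≥0∞} (hp : p ≠ ∞) (lam : MorreyIdx d j → ℂ) :
    mNorm d j u p lam = ⨆ ν, ⨆ m, mTerm d j u p lam ν m := by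
  rw [mNorm, if_neg hp]; rfl

lemma mTerm_le_mNorm {u p : ℝ≥0∞} (hp : p ≠ ∞) (lam : MorreyIdx d j → ℂ)
    (ν : Fin (j + 1)) (m : Fin d → Fin (2 ^ (j - (ν : ℕ)))) :
    mTerm d j u p lam ν m ≤ mNorm d j u p lam := by
  rw [mNorm_eq_iSup hp]
  refine le_trans (le_ciSup (Set.finite_range _).bddAbove m) ?_
  exact le_ciSup (f := fun ν => ⨆ m, mTerm d j u p lam ν m)
    (Set.finite_range _).bddAbove ν

lemma mNorm_le_of {u p : ℝ≥0∞} (hp : p ≠ ∞) (lam : MorreyIdx d j → ℂ) {C : ℝ}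
    (h : ∀ ν m, mTerm d j u p lam ν m ≤ C) : mNorm d j u p lam ≤ C := by
  rw [mNorm_eq_iSup hp]
  refine ciSup_le fun ν => ?_
  exact ciSup_le fun m => h ν m

lemma coord_le_mNorm (u p : ℝ≥0∞)
    (h : (1 ≤ p ∧ p ≤ u ∧ u ≠ ∞) ∨ (p = ∞ ∧ u = ∞))
    (lam : MorreyIdx d j → ℂ) (k : MorreyIdx d j) :
    ‖lam k‖ ≤ mNorm d j u p lam := by
  by_cases hp : p = ∞
  · rw [mNorm, if_pos hp]
    exact le_ciSup (f := fun k : MorreyIdx d j => ‖lam k‖) (Set.finite_range _).bddAbove k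
  · have hfin : 1 ≤ p ∧ p ≤ u ∧ u ≠ ∞ := h.resolve_right fun hh => hp hh.1
    have hp1 : 1 ≤ p.toReal := by
      rw [← ENNReal.toReal_one]
      exact ENNReal.toReal_mono hp hfin.1
    have hp0 : p.toReal ≠ 0 := by linarith
    have hcast : 2 ^ j = 2 ^ (j - ((0 : Fin (j + 1)) : ℕ)) := by simp
    set m : Fin d → Fin (2 ^ (j - ((0 : Fin (j + 1)) : ℕ))) :=
      fun i => Fin.cast hcast (k i) with hm
    refine le_trans ?_ (mTerm_le_mNorm hp lam 0 m)
    have hval : mTerm d j u p lam 0 m = ‖lam k‖ := by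
      rw [mTerm]
      have hif : ∀ k' : MorreyIdx d j,
          (if memSubcube ((0 : Fin (j + 1)) : ℕ) (fun i => (m i : ℕ)) k'
            then ‖lam k'‖ ^ p.toReal else 0)
          = if k' = k then ‖lam k'‖ ^ p.toReal else 0 := by
        intro k'
        refine if_congr ?_ rfl rfl
        simp only [memSubcube, Fin.val_zero, pow_zero, Nat.div_one, hm, Fin.coe_cast]
        constructor
        · intro hh; funext i; exact Fin.val_injective (hh i)
        · intro hh i; rw [hh]; rfl
      rw [Finset.sum_congr rfl fun k' _ => hif k',
        Finset.sum_ite_eq' Finset.univ k (fun k' => ‖lam k'‖ ^ p.toReal),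
        if_pos (Finset.mem_univ k)]
      have h00 : ((((0 : Fin (j + 1)) : ℕ) * d : ℕ) : ℝ) = 0 := by simp
      rw [h00, zero_mul, Real.rpow_zero, one_mul, ← Real.rpow_mul (norm_nonneg _),
        mul_one_div_cancel hp0, Real.rpow_one]
    rw [hval]

lemma mNorm_nonneg (u p : ℝ≥0∞)
    (h : (1 ≤ p ∧ p ≤ u ∧ u ≠ ∞) ∨ (p = ∞ ∧ u = ∞)) (lam : MorreyIdx d j → ℂ) :
    0 ≤ mNorm d j u p lam :=
  le_trans (norm_nonneg _) (coord_le_mNorm u p h lam (Classical.arbitrary _))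

/-- standard basis vector -/
def eBasis (d j : ℕ) (k : MorreyIdx d j) : MorreyIdx d j → ℂ := fun k' => if k' = k then 1 else 0

lemma eBasis_pair (lam : MorreyIdx d j → ℂ) (k : MorreyIdx d j) :
    ∑ i, eBasis d j k i * lam i = lam k := by
  simp [eBasis, ite_mul, Finset.sum_ite_eq']

lemma mNorm_eBasis_le_one (u p : ℝ≥0∞)
    (h : (1 ≤ p ∧ p ≤ u ∧ u ≠ ∞) ∨ (p = ∞ ∧ u = ∞)) (k : MorreyIdx d j) :
    mNorm d j u p (eBasis d j k) ≤ 1 := by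
  by_cases hp : p = ∞
  · rw [mNorm, if_pos hp]
    refine ciSup_le fun k' => ?_
    by_cases hk : k' = k <;> simp [eBasis, hk]
  · have hfin : 1 ≤ p ∧ p ≤ u ∧ u ≠ ∞ := h.resolve_right fun hh => hp hh.1
    have hp1 : 1 ≤ p.toReal := by
      rw [← ENNReal.toReal_one]
      exact ENNReal.toReal_mono hp hfin.1
    have hpt0 : 0 < p.toReal := lt_of_lt_of_le zero_lt_one hp1
    have hple : p.toReal ≤ u.toReal := ENNReal.toReal_mono hfin.2.2 hfin.2.1
    refine mNorm_le_of hp _ fun ν m => ?_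
    rw [mTerm]
    have hb : ∀ k' : MorreyIdx d j,
        (if memSubcube (ν : ℕ) (fun i => (m i : ℕ)) k'
          then ‖eBasis d j k k'‖ ^ p.toReal else 0) ≤ (if k' = k then (1 : ℝ) else 0) := by
      intro k'
      by_cases hk : k' = k
      · subst hk
        split <;> simp [eBasis]
      · simp [eBasis, hk, Real.zero_rpow hpt0.ne']
    have hsum : (∑ k' : MorreyIdx d j,
        if memSubcube (ν : ℕ) (fun i => (m i : ℕ)) k'
          then ‖eBasis d j k k'‖ ^ p.toReal else 0) ≤ 1 := by
      calc (∑ k' : MorreyIdx d j, if memSubcube (ν : ℕ) (fun i => (m i : ℕ)) k'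
              then ‖eBasis d j k k'‖ ^ p.toReal else 0)
          ≤ ∑ k' : MorreyIdx d j, (if k' = k then (1 : ℝ) else 0) :=
            Finset.sum_le_sum fun k' _ => hb k'
        _ = 1 := by
            rw [Finset.sum_ite_eq' Finset.univ k (fun _ => (1 : ℝ))]
            simp
    have hsnn : (0:ℝ) ≤ ∑ k' : MorreyIdx d j,
        if memSubcube (ν : ℕ) (fun i => (m i : ℕ)) k'
          then ‖eBasis d j k k'‖ ^ p.toReal else 0 := by
      refine Finset.sum_nonneg fun k' _ => ?_
      split
      · positivity
      · exact le_rfl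
    have hc1 : (2 : ℝ) ^ ((((ν : ℕ) * d : ℕ) : ℝ) * (1 / u.toReal - 1 / p.toReal)) ≤ 1 := by
      apply Real.rpow_le_one_of_one_le_of_nonpos one_le_two
      apply mul_nonpos_of_nonneg_of_nonpos (Nat.cast_nonneg _)
      have : 1 / u.toReal ≤ 1 / p.toReal := one_div_le_one_div_of_le hpt0 hple
      linarith
    have hc2 : ((∑ k' : MorreyIdx d j,
        if memSubcube (ν : ℕ) (fun i => (m i : ℕ)) k'
          then ‖eBasis d j k k'‖ ^ p.toReal else 0) ^ (1 / p.toReal)) ≤ 1 :=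
      Real.rpow_le_one hsnn hsum (by positivity)
    calc (2 : ℝ) ^ ((((ν : ℕ) * d : ℕ) : ℝ) * (1 / u.toReal - 1 / p.toReal)) *
          ((∑ k' : MorreyIdx d j, if memSubcube (ν : ℕ) (fun i => (m i : ℕ)) k'
            then ‖eBasis d j k k'‖ ^ p.toReal else 0) ^ (1 / p.toReal))
        ≤ 1 * 1 := mul_le_mul hc1 hc2 (Real.rpow_nonneg hsnn _) zero_le_one
      _ = 1 := mul_one 1

end Aux

section Aux2

open Finset

variable {d j : ℕ}

lemma mDualNorm_nonneg (N : (MorreyIdx d j → ℂ) → ℝ) (f : MorreyIdx d j → ℂ) :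
    0 ≤ mDualNorm d j N f :=
  Real.sInf_nonneg fun _ hC => hC.1

lemma mDualNorm_le (N : (MorreyIdx d j → ℂ) → ℝ) (f : MorreyIdx d j → ℂ) (C : ℝ)
    (hC : 0 ≤ C) (h : ∀ lam, ‖∑ k, f k * lam k‖ ≤ C * N lam) :
    mDualNorm d j N f ≤ C :=
  csInf_le ⟨0, fun _ hx => hx.1⟩ ⟨hC, h⟩

lemma mDualNorm_zero (N : (MorreyIdx d j → ℂ) → ℝ) :
    mDualNorm d j N (fun _ => 0) = 0 :=
  le_antisymm (mDualNorm_le N _ 0 le_rfl (by intro lam; simp)) (mDualNorm_nonneg N _)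

lemma pairing_le (N : (MorreyIdx d j → ℂ) → ℝ)
    (hN : ∀ lam (k : MorreyIdx d j), ‖lam k‖ ≤ N lam) (f y : MorreyIdx d j → ℂ) :
    ‖∑ k, f k * y k‖ ≤ mDualNorm d j N f * N y := by
  have hNy : 0 ≤ N y := le_trans (norm_nonneg _) (hN y (Classical.arbitrary _))
  have hne : Set.Nonempty
      {C : ℝ | 0 ≤ C ∧ ∀ lam : MorreyIdx d j → ℂ, ‖∑ k, f k * lam k‖ ≤ C * N lam} := by
    refine ⟨∑ k, ‖f k‖, Finset.sum_nonneg fun _ _ => norm_nonneg _, fun lam => ?_⟩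
    calc ‖∑ k, f k * lam k‖ ≤ ∑ k, ‖f k * lam k‖ := norm_sum_le _ _
      _ ≤ ∑ k, ‖f k‖ * N lam := Finset.sum_le_sum fun k _ => by
            rw [norm_mul]
            exact mul_le_mul_of_nonneg_left (hN lam k) (norm_nonneg _)
      _ = (∑ k, ‖f k‖) * N lam := (Finset.sum_mul _ _ _).symm
  rcases eq_or_lt_of_le hNy with h0 | h0
  · have hy : ∀ k, y k = 0 := fun k =>
      norm_le_zero_iff.mp (le_trans (hN y k) h0.symm.le)
    have hz : ∑ k, f k * y k = 0 := by
      refine Finset.sum_eq_zero fun k _ => ?_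
      rw [hy k, mul_zero]
    rw [hz, norm_zero, ← h0, mul_zero]
  · have hdiv : ‖∑ k, f k * y k‖ / N y ≤ mDualNorm d j N f :=
      le_csInf hne fun C hC => (div_le_iff₀ h0).mpr (hC.2 y)
    exact (div_le_iff₀ h0).mp hdiv

lemma card_subcube_le (ν : ℕ) (m : Fin d → ℕ) :
    ((Finset.univ.filter fun k : MorreyIdx d j => memSubcube ν m k).card : ℝ)
      ≤ (2 : ℝ) ^ ((((ν * d : ℕ)) : ℝ)) := by
  have h2 : 0 < 2 ^ ν := pow_pos two_pos ν
  have hnat : (Finset.univ.filter fun k : MorreyIdx d j => memSubcube ν m k).card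
      ≤ 2 ^ (ν * d) := by
    calc (Finset.univ.filter fun k : MorreyIdx d j => memSubcube ν m k).card
        ≤ (Finset.univ : Finset (Fin d → Fin (2 ^ ν))).card := by
          apply Finset.card_le_card_of_injOn
            (fun k i => (⟨(k i : ℕ) % 2 ^ ν, Nat.mod_lt _ h2⟩ : Fin (2 ^ ν)))
            (fun _ _ => Finset.mem_univ _)
          intro k₁ hk₁ k₂ hk₂ hf
          rw [Finset.mem_coe, Finset.mem_filter] at hk₁ hk₂
          funext i
          apply Fin.val_injective
          have h3 : ((k₁ i : ℕ) % 2 ^ ν) = ((k₂ i : ℕ) % 2 ^ ν) :=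
            congrArg Fin.val (congrFun hf i)
          calc (k₁ i : ℕ) = 2 ^ ν * ((k₁ i : ℕ) / 2 ^ ν) + (k₁ i : ℕ) % 2 ^ ν :=
                (Nat.div_add_mod _ _).symm
            _ = 2 ^ ν * ((k₂ i : ℕ) / 2 ^ ν) + (k₂ i : ℕ) % 2 ^ ν := by
                rw [hk₁.2 i, hk₂.2 i, h3]
            _ = (k₂ i : ℕ) := Nat.div_add_mod _ _
      _ = 2 ^ (ν * d) := by
          rw [Finset.card_univ, Fintype.card_fun]
          simp [pow_mul]
  calc ((Finset.univ.filter fun k : MorreyIdx d j => memSubcube ν m k).card : ℝ)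
      ≤ ((2 ^ (ν * d) : ℕ) : ℝ) := Nat.cast_le.mpr hnat
    _ = (2 : ℝ) ^ ((((ν * d : ℕ)) : ℝ)) := by
        rw [Real.rpow_natCast]; push_cast; ring

lemma sum_rpow_le_card_rpow (F : Finset (MorreyIdx d j)) (x : MorreyIdx d j → ℝ)
    (hx : ∀ k, 0 ≤ x k) {a c : ℝ} (ha : 0 < a) (hac : a ≤ c) :
    ∑ k ∈ F, x k ^ a ≤ (F.card : ℝ) ^ (1 - a / c) * (∑ k ∈ F, x k ^ c) ^ (a / c) := by
  rcases eq_or_lt_of_le hac with rfl | hlt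
  · simp [div_self ha.ne']
  · have hc : 0 < c := ha.trans hlt
    have hr : 1 < c / a := (one_lt_div ha).mpr hlt
    have hr0 : 0 < c / a := lt_trans zero_lt_one hr
    have hpq : (c / a).HolderConjugate ((c / a) / (c / a - 1)) :=
      Real.HolderConjugate.conjExponent hr
    have H := Real.inner_le_Lp_mul_Lq F (fun k => x k ^ a) (fun _ => (1 : ℝ)) hpq
    simp only [mul_one] at H
    have e1 : ∀ k ∈ F, |x k ^ a| ^ (c / a) = x k ^ c := by
      intro k _
      rw [abs_of_nonneg (Real.rpow_nonneg (hx k) a), ← Real.rpow_mul (hx k)]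
      congr 1
      field_simp
    have e2 : (∑ _k ∈ F, |(1 : ℝ)| ^ ((c / a) / (c / a - 1))) = (F.card : ℝ) := by simp
    rw [Finset.sum_congr rfl e1, e2] at H
    have e3 : 1 / (c / a) = a / c := one_div_div _ _
    have e4 : 1 / ((c / a) / (c / a - 1)) = 1 - a / c := by
      rw [one_div_div, sub_div, div_self hr0.ne', one_div_div]
    rw [e3, e4] at H
    rw [mul_comm] at H
    exact H

end Aux2

section Aux3

open Finset

variable {d j : ℕ}

lemma mNorm_mono (u₁ p₁ u₂ p₂ : ℝ≥0∞)
    (h₁ : (1 ≤ p₁ ∧ p₁ ≤ u₁ ∧ u₁ ≠ ∞) ∨ (p₁ = ∞ ∧ u₁ = ∞))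
    (h₂ : (1 ≤ p₂ ∧ p₂ ≤ u₂ ∧ u₂ ≠ ∞) ∨ (p₂ = ∞ ∧ u₂ = ∞))
    (hcase : (p₁ ≤ p₂ ∧ u₂ ≤ u₁) ∨ (p₂ < p₁ ∧ p₁ / u₁ ≤ p₂ / u₂) ∨ (p₁ = ∞ ∧ u₁ = ∞))
    (lam : MorreyIdx d j → ℂ) :
    mNorm d j u₁ p₁ lam ≤ mNorm d j u₂ p₂ lam := by
  by_cases hp1 : p₁ = ∞
  · rw [mNorm, if_pos hp1]
    exact ciSup_le fun k => coord_le_mNorm u₂ p₂ h₂ lam k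
  · obtain ⟨hp11, hp1u, hu1⟩ := h₁.resolve_right fun hh => hp1 hh.1
    have hp2 : p₂ ≠ ∞ := by
      rcases hcase with ⟨hpp, huu⟩ | ⟨hpp, _⟩ | ⟨hpp, _⟩
      · intro h
        rcases h₂ with ⟨_, hpu2, hu2⟩ | ⟨_, hu2⟩
        · exact hu2 (top_le_iff.mp (h ▸ hpu2))
        · exact hu1 (top_le_iff.mp (hu2 ▸ huu))
      · exact hpp.ne_top
      · exact absurd hpp hp1
    obtain ⟨hp21, hp2u, hu2⟩ := h₂.resolve_right fun hh => hp2 hh.1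
    refine mNorm_le_of hp1 lam fun ν m => ?_
    have hT2' := mTerm_le_mNorm (u := u₂) hp2 lam ν m
    rw [mTerm, ← Finset.sum_filter] at hT2'
    rw [mTerm, ← Finset.sum_filter]
    have hcard' := card_subcube_le (d := d) (j := j) ((ν : ℕ)) (fun i => (m i : ℕ))
    set a := p₁.toReal with hadf
    set b := u₁.toReal with hbdf
    set c := p₂.toReal with hcdf
    set e := u₂.toReal with hedf
    set A := ((((ν : ℕ) * d : ℕ)) : ℝ) with hAdf
    set F := Finset.univ.filter
      (fun k : MorreyIdx d j => memSubcube (ν : ℕ) (fun i => (m i : ℕ)) k) with hFdf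
    set M := mNorm d j u₂ p₂ lam with hMdf
    set S1 := ∑ k ∈ F, ‖lam k‖ ^ a with hS1df
    set S2 := ∑ k ∈ F, ‖lam k‖ ^ c with hS2df
    have ha1 : 1 ≤ a := by
      rw [hadf, ← ENNReal.toReal_one]; exact ENNReal.toReal_mono hp1 hp11
    have hc1 : 1 ≤ c := by
      rw [hcdf, ← ENNReal.toReal_one]; exact ENNReal.toReal_mono hp2 hp21
    have hab : a ≤ b := by rw [hadf, hbdf]; exact ENNReal.toReal_mono hu1 hp1u
    have hce : c ≤ e := by rw [hcdf, hedf]; exact ENNReal.toReal_mono hu2 hp2u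
    have ha0 : 0 < a := lt_of_lt_of_le zero_lt_one ha1
    have hc0 : 0 < c := lt_of_lt_of_le zero_lt_one hc1
    have hb0 : 0 < b := lt_of_lt_of_le ha0 hab
    have he0 : 0 < e := lt_of_lt_of_le hc0 hce
    have ha0' : a ≠ 0 := ha0.ne'
    have hb0' : b ≠ 0 := hb0.ne'
    have hc0' : c ≠ 0 := hc0.ne'
    have he0' : e ≠ 0 := he0.ne'
    have hA0 : 0 ≤ A := by rw [hAdf]; exact Nat.cast_nonneg _
    have hcoord : ∀ k, ‖lam k‖ ≤ M := by
      rw [hMdf]; exact fun k => coord_le_mNorm u₂ p₂ (Or.inl ⟨hp21, hp2u, hu2⟩) lam k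
    have hM0 : 0 ≤ M := le_trans (norm_nonneg _) (hcoord (Classical.arbitrary _))
    have hS1nn : 0 ≤ S1 := by
      rw [hS1df]; exact Finset.sum_nonneg fun k _ => Real.rpow_nonneg (norm_nonneg _) _
    have hS2nn : 0 ≤ S2 := by
      rw [hS2df]; exact Finset.sum_nonneg fun k _ => Real.rpow_nonneg (norm_nonneg _) _
    have hT2 : (2 : ℝ) ^ (A * (1 / e - 1 / c)) * S2 ^ (1 / c) ≤ M := hT2'
    have h2pos : (0 : ℝ) < (2 : ℝ) ^ (A * (1 / e - 1 / c)) := Real.rpow_pos_of_pos two_pos _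
    have hS2M : S2 ^ (1 / c) ≤ (2 : ℝ) ^ (A * (1 / c - 1 / e)) * M := by
      rw [← le_div_iff₀' h2pos] at hT2
      refine le_trans hT2 (le_of_eq ?_)
      rw [div_eq_mul_inv, ← Real.rpow_neg (by norm_num : (0 : ℝ) ≤ 2), mul_comm,
        show -(A * (1 / e - 1 / c)) = A * (1 / c - 1 / e) by ring]
    rcases hcase with ⟨hpp, huu⟩ | ⟨hpp, hq⟩ | ⟨hpp, _⟩
    · -- case p₁ ≤ p₂, u₂ ≤ u₁
      have hac : a ≤ c := by rw [hadf, hcdf]; exact ENNReal.toReal_mono hp2 hpp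
      have hbe : e ≤ b := by rw [hbdf, hedf]; exact ENNReal.toReal_mono hu1 huu
      have hexp1 : 0 ≤ 1 - a / c := by
        have : a / c ≤ 1 := (div_le_one hc0).mpr hac
        linarith
      have hhold : S1 ≤ (F.card : ℝ) ^ (1 - a / c) * S2 ^ (a / c) := by
        rw [hS1df, hS2df]
        exact sum_rpow_le_card_rpow F (fun k => ‖lam k‖) (fun k => norm_nonneg _) ha0 hac
      have h1 : S1 ≤ ((2 : ℝ) ^ A) ^ (1 - a / c) * S2 ^ (a / c) := by
        refine le_trans hhold (mul_le_mul_of_nonneg_right ?_ (Real.rpow_nonneg hS2nn _))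
        exact Real.rpow_le_rpow (Nat.cast_nonneg _) hcard' hexp1
      have h2 : S1 ^ (1 / a) ≤ (((2 : ℝ) ^ A) ^ (1 - a / c) * S2 ^ (a / c)) ^ (1 / a) :=
        Real.rpow_le_rpow hS1nn h1 (by positivity)
      have eS2 : (S2 ^ (a / c)) ^ (1 / a) = S2 ^ (1 / c) := by
        rw [← Real.rpow_mul hS2nn]
        congr 1
        field_simp
      have hexp2 : A * (1 - a / c) * (1 / a) = A * (1 / a - 1 / c) := by
        have hh : (1 - a / c) * (1 / a) = 1 / a - 1 / c := by
          rw [sub_mul, one_mul, mul_one_div, div_div, mul_comm c a,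
            div_mul_cancel_left₀ ha0']
          simp [one_div]
        rw [mul_assoc, hh]
      have h3 : (((2 : ℝ) ^ A) ^ (1 - a / c) * S2 ^ (a / c)) ^ (1 / a)
          = (2 : ℝ) ^ (A * (1 / a - 1 / c)) * S2 ^ (1 / c) := by
        rw [← Real.rpow_mul (by norm_num : (0 : ℝ) ≤ 2),
          Real.mul_rpow (Real.rpow_nonneg (by norm_num) _) (Real.rpow_nonneg hS2nn _),
          ← Real.rpow_mul (by norm_num : (0 : ℝ) ≤ 2), eS2, hexp2]
      calc (2 : ℝ) ^ (A * (1 / b - 1 / a)) * S1 ^ (1 / a)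
          ≤ (2 : ℝ) ^ (A * (1 / b - 1 / a)) *
              ((2 : ℝ) ^ (A * (1 / a - 1 / c)) * S2 ^ (1 / c)) :=
            mul_le_mul_of_nonneg_left (le_trans h2 (le_of_eq h3)) (by positivity)
        _ = (2 : ℝ) ^ (A * (1 / b - 1 / c)) * S2 ^ (1 / c) := by
            rw [← mul_assoc, ← Real.rpow_add two_pos,
              show A * (1 / b - 1 / a) + A * (1 / a - 1 / c) = A * (1 / b - 1 / c) by ring]
        _ ≤ (2 : ℝ) ^ (A * (1 / e - 1 / c)) * S2 ^ (1 / c) := by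
            refine mul_le_mul_of_nonneg_right ?_ (Real.rpow_nonneg hS2nn _)
            apply Real.rpow_le_rpow_of_exponent_le one_le_two
            have h1be : 1 / b ≤ 1 / e := one_div_le_one_div_of_le he0 hbe
            have : 1 / b - 1 / c ≤ 1 / e - 1 / c := by linarith
            exact mul_le_mul_of_nonneg_left this hA0
        _ ≤ M := hT2
    · -- case p₂ < p₁, p₁/u₁ ≤ p₂/u₂
      have hca : c < a := by
        rw [hadf, hcdf]; exact ENNReal.toReal_strict_mono hp1 hpp
      have hu2ne : u₂ ≠ 0 := by
        intro h0
        rw [h0] at hp2u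
        exact (lt_of_lt_of_le zero_lt_one (le_trans hp21 hp2u)).ne' rfl
      have hq' : a / b ≤ c / e := by
        have hdiv := ENNReal.toReal_mono (ENNReal.div_lt_top hp2 hu2ne).ne hq
        rw [ENNReal.toReal_div, ENNReal.toReal_div] at hdiv
        rw [hadf, hbdf, hcdf, hedf]
        exact hdiv
      have hsplit : S1 ≤ M ^ (a - c) * S2 := by
        calc S1 = ∑ k ∈ F, ‖lam k‖ ^ a := hS1df
          _ ≤ ∑ k ∈ F, ‖lam k‖ ^ c * M ^ (a - c) := by
              refine Finset.sum_le_sum fun k _ => ?_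
              have hxa : ‖lam k‖ ^ c * ‖lam k‖ ^ (a - c) = ‖lam k‖ ^ a := by
                rw [← Real.rpow_add' (norm_nonneg _)
                  (by intro h0; exact ha0.ne' (by linarith))]
                congr 1
                ring
              rw [← hxa]
              exact mul_le_mul_of_nonneg_left
                (Real.rpow_le_rpow (norm_nonneg _) (hcoord k) (by linarith))
                (Real.rpow_nonneg (norm_nonneg _) _)
          _ = (∑ k ∈ F, ‖lam k‖ ^ c) * M ^ (a - c) := by rw [Finset.sum_mul]
          _ = M ^ (a - c) * S2 := by rw [hS2df, mul_comm]
      have hS2a : (S2 ^ (1 / c)) ^ (c / a) = S2 ^ (1 / a) := by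
        rw [← Real.rpow_mul hS2nn]
        congr 1
        field_simp
      have hfinal : S1 ^ (1 / a) ≤
          M ^ ((a - c) / a) * ((2 : ℝ) ^ (A * (1 / c - 1 / e) * (c / a)) * M ^ (c / a)) := by
        calc S1 ^ (1 / a) ≤ (M ^ (a - c) * S2) ^ (1 / a) :=
              Real.rpow_le_rpow hS1nn hsplit (by positivity)
          _ = M ^ ((a - c) / a) * S2 ^ (1 / a) := by
              rw [Real.mul_rpow (Real.rpow_nonneg hM0 _) hS2nn, ← Real.rpow_mul hM0,
                mul_one_div]
          _ = M ^ ((a - c) / a) * ((S2 ^ (1 / c)) ^ (c / a)) := by rw [hS2a]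
          _ ≤ M ^ ((a - c) / a) * (((2 : ℝ) ^ (A * (1 / c - 1 / e)) * M) ^ (c / a)) := by
              refine mul_le_mul_of_nonneg_left ?_ (Real.rpow_nonneg hM0 _)
              exact Real.rpow_le_rpow (Real.rpow_nonneg hS2nn _) hS2M (by positivity)
          _ = M ^ ((a - c) / a) * ((2 : ℝ) ^ (A * (1 / c - 1 / e) * (c / a)) * M ^ (c / a)) := by
              rw [Real.mul_rpow (by positivity) hM0,
                ← Real.rpow_mul (by norm_num : (0 : ℝ) ≤ 2)]
      have hone : (a - c) / a + c / a = 1 := by field_simp; ring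
      have hM1 : M ^ ((a - c) / a) * M ^ (c / a) = M := by
        rw [← Real.rpow_add' hM0 (by rw [hone]; norm_num), hone, Real.rpow_one]
      have hkey : 1 / b ≤ c / (e * a) := by
        have h1 : (a / b) * a⁻¹ ≤ (c / e) * a⁻¹ :=
          mul_le_mul_of_nonneg_right hq' (inv_nonneg.mpr ha0.le)
        have e1 : (a / b) * a⁻¹ = 1 / b := by
          field_simp
        have e2 : (c / e) * a⁻¹ = c / (e * a) := by rw [← div_eq_mul_inv, div_div]
        rw [e1, e2] at h1
        exact h1
      calc (2 : ℝ) ^ (A * (1 / b - 1 / a)) * S1 ^ (1 / a)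
          ≤ (2 : ℝ) ^ (A * (1 / b - 1 / a)) *
              (M ^ ((a - c) / a) * ((2 : ℝ) ^ (A * (1 / c - 1 / e) * (c / a)) * M ^ (c / a))) :=
            mul_le_mul_of_nonneg_left hfinal (by positivity)
        _ = ((2 : ℝ) ^ (A * (1 / b - 1 / a)) * (2 : ℝ) ^ (A * (1 / c - 1 / e) * (c / a))) *
              (M ^ ((a - c) / a) * M ^ (c / a)) := by ring
        _ = (2 : ℝ) ^ (A * (1 / b - 1 / a) + A * (1 / c - 1 / e) * (c / a)) * M := by
            rw [← Real.rpow_add two_pos, hM1]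
        _ ≤ 1 * M := by
            refine mul_le_mul_of_nonneg_right ?_ hM0
            apply Real.rpow_le_one_of_one_le_of_nonpos one_le_two
            have hrw : A * (1 / b - 1 / a) + A * (1 / c - 1 / e) * (c / a)
                = A * (1 / b - c / (e * a)) := by
              field_simp
              ring
            rw [hrw]
            exact mul_nonpos_of_nonneg_of_nonpos hA0 (by linarith)
        _ = M := one_mul M
    · exact absurd hpp hp1

end Aux3

/-- `ν(id_j : m^{2^{jd}}_{u₁,p₁} → m^{2^{jd}}_{u₂,p₂}) = 2^{jd}` in the
cases (`p₁ ≤ p₂` and `u₂ ≤ u₁`), or (`p₁ > p₂` and `p₁/u₁ ≤ p₂/u₂`), or `p₁ = u₁ = ∞`. -/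
theorem stmt9 (d : ℕ) (hd : 0 < d) (u₁ p₁ u₂ p₂ : ℝ≥0∞)
    (h₁ : (1 ≤ p₁ ∧ p₁ ≤ u₁ ∧ u₁ ≠ ∞) ∨ (p₁ = ∞ ∧ u₁ = ∞))
    (h₂ : (1 ≤ p₂ ∧ p₂ ≤ u₂ ∧ u₂ ≠ ∞) ∨ (p₂ = ∞ ∧ u₂ = ∞))
    (j : ℕ)
    (hcase : (p₁ ≤ p₂ ∧ u₂ ≤ u₁) ∨ (p₂ < p₁ ∧ p₁ / u₁ ≤ p₂ / u₂) ∨ (p₁ = ∞ ∧ u₁ = ∞)) :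
    nucNormIdM d j (mNorm d j u₁ p₁) (mNorm d j u₂ p₂) = (2 : ℝ) ^ (j * d) := by
  classical
  have hco1 : ∀ (lam : MorreyIdx d j → ℂ) (k : MorreyIdx d j),
      ‖lam k‖ ≤ mNorm d j u₁ p₁ lam := fun lam k => coord_le_mNorm u₁ p₁ h₁ lam k
  have hmono : ∀ lam, mNorm d j u₁ p₁ lam ≤ mNorm d j u₂ p₂ lam :=
    mNorm_mono u₁ p₁ u₂ p₂ h₁ h₂ hcase
  obtain ⟨n, hn⟩ : ∃ n, n = Fintype.card (MorreyIdx d j) := ⟨_, rfl⟩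
  have hncard : (n : ℝ) = (2 : ℝ) ^ (j * d) := by
    rw [hn, Fintype.card_fun, Fintype.card_fin, Fintype.card_fin]
    push_cast
    rw [← pow_mul]
  set Nucset : Set ℝ := {c : ℝ |
    ∃ a y, IsNuclearRepIdM d j (mNorm d j u₁ p₁) (mNorm d j u₂ p₂) a y ∧
      c = ∑' t, mDualNorm d j (mNorm d j u₁ p₁) (a t) * mNorm d j u₂ p₂ (y t)} with hNuc
  -- lower bound for every representation
  have key : ∀ cc ∈ Nucset, (n : ℝ) ≤ cc := by
    intro cc hcc
    rw [hNuc] at hcc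
    obtain ⟨aa, yy, ⟨hsum, hrep⟩, rfl⟩ := hcc
    have h1 : ∀ k : MorreyIdx d j, HasSum (fun t => aa t k * yy t k) 1 := by
      intro k
      simpa [eBasis, mul_ite, Finset.sum_ite_eq'] using hrep (eBasis d j k) k
    have h2 : HasSum (fun t => ∑ k, aa t k * yy t k) ((n : ℂ)) := by
      have h := hasSum_sum (s := Finset.univ)
        (f := fun (k : MorreyIdx d j) (t : ℕ) => aa t k * yy t k)
        (a := fun _ => (1 : ℂ)) (fun k _ => h1 k)
      have hval : ∑ _k : MorreyIdx d j, (1 : ℂ) = (n : ℂ) := by simp [hn]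
      exact hval ▸ h
    have h3 : ∀ t, ‖∑ k, aa t k * yy t k‖ ≤
        mDualNorm d j (mNorm d j u₁ p₁) (aa t) * mNorm d j u₂ p₂ (yy t) := fun t =>
      le_trans (pairing_le (mNorm d j u₁ p₁) hco1 (aa t) (yy t))
        (mul_le_mul_of_nonneg_left (hmono (yy t)) (mDualNorm_nonneg _ _))
    have hs3 : Summable fun t => ‖∑ k, aa t k * yy t k‖ :=
      Summable.of_nonneg_of_le (fun t => norm_nonneg _) h3 hsum
    calc (n : ℝ) = ‖(n : ℂ)‖ := by simp
      _ = ‖∑' t, ∑ k, aa t k * yy t k‖ := by rw [h2.tsum_eq]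
      _ ≤ ∑' t, ‖∑ k, aa t k * yy t k‖ := norm_tsum_le_tsum_norm hs3
      _ ≤ ∑' t, mDualNorm d j (mNorm d j u₁ p₁) (aa t) * mNorm d j u₂ p₂ (yy t) :=
          Summable.tsum_le_tsum h3 hs3 hsum
  -- the standard-basis representation
  obtain ⟨eqv⟩ : Nonempty (Fin n ≃ MorreyIdx d j) := by
    rw [hn]
    exact ⟨(Fintype.equivFin (MorreyIdx d j)).symm⟩
  set aa : ℕ → MorreyIdx d j → ℂ :=
    fun t => if h : t < n then eBasis d j (eqv ⟨t, h⟩) else fun _ => 0 with haa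
  have hlt : ∀ (t : ℕ) (h : t < n), aa t = eBasis d j (eqv ⟨t, h⟩) := by
    intro t h; rw [haa]; exact dif_pos h
  have hge : ∀ t : ℕ, n ≤ t → aa t = fun _ => 0 := by
    intro t h; rw [haa]; exact dif_neg (not_lt.mpr h)
  have hrep : IsNuclearRepIdM d j (mNorm d j u₁ p₁) (mNorm d j u₂ p₂) aa aa := by
    constructor
    · apply summable_of_ne_finset_zero (s := Finset.range n)
      intro t ht
      rw [Finset.mem_range, not_lt] at ht
      rw [hge t ht, mDualNorm_zero, zero_mul]
    · intro lam k
      have hz : ∀ t ∉ Finset.range n, ((∑ i, aa t i * lam i) * aa t k) = 0 := by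
        intro t ht
        rw [Finset.mem_range, not_lt] at ht
        rw [hge t ht]
        simp
      have hhs : HasSum (fun t => (∑ i, aa t i * lam i) * aa t k) _ :=
        hasSum_sum_of_ne_finset_zero hz
      have hval : ∑ t ∈ Finset.range n, (∑ i, aa t i * lam i) * aa t k = lam k := by
        rw [← Fin.sum_univ_eq_sum_range]
        have hterm : ∀ t : Fin n, (∑ i, aa (t : ℕ) i * lam i) * aa (t : ℕ) k
            = (fun k' => if k = k' then lam k' else 0) (eqv t) := by
          intro t
          have hlt' : aa (t : ℕ) = eBasis d j (eqv t) := hlt (t : ℕ) t.isLt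
          rw [hlt', eBasis_pair]
          simp [eBasis, mul_ite]
        calc ∑ t : Fin n, (∑ i, aa (t : ℕ) i * lam i) * aa (t : ℕ) k
            = ∑ t : Fin n, (fun k' => if k = k' then lam k' else 0) (eqv t) :=
              Finset.sum_congr rfl fun t _ => hterm t
          _ = ∑ k', if k = k' then lam k' else 0 :=
              Equiv.sum_comp eqv (fun k' => if k = k' then lam k' else 0)
          _ = lam k := by simp
      exact hval ▸ hhs
  have hmem : (∑' t, mDualNorm d j (mNorm d j u₁ p₁) (aa t) * mNorm d j u₂ p₂ (aa t))
      ∈ Nucset := by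
    rw [hNuc]
    exact ⟨aa, aa, hrep, rfl⟩
  have hupper : (∑' t, mDualNorm d j (mNorm d j u₁ p₁) (aa t) * mNorm d j u₂ p₂ (aa t))
      ≤ (n : ℝ) := by
    have hz : ∀ t ∉ Finset.range n,
        mDualNorm d j (mNorm d j u₁ p₁) (aa t) * mNorm d j u₂ p₂ (aa t) = 0 := by
      intro t ht
      rw [Finset.mem_range, not_lt] at ht
      rw [hge t ht, mDualNorm_zero, zero_mul]
    rw [tsum_eq_sum hz]
    calc ∑ t ∈ Finset.range n,
          mDualNorm d j (mNorm d j u₁ p₁) (aa t) * mNorm d j u₂ p₂ (aa t)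
        ≤ ∑ _t ∈ Finset.range n, (1 : ℝ) := by
          refine Finset.sum_le_sum fun t ht => ?_
          rw [Finset.mem_range] at ht
          rw [hlt t ht]
          have hdual : mDualNorm d j (mNorm d j u₁ p₁) (eBasis d j (eqv ⟨t, ht⟩)) ≤ 1 := by
            refine mDualNorm_le _ _ 1 zero_le_one fun lam => ?_
            rw [one_mul, eBasis_pair]
            exact hco1 lam _
          have hnn : 0 ≤ mNorm d j u₂ p₂ (eBasis d j (eqv ⟨t, ht⟩)) :=
            mNorm_nonneg u₂ p₂ h₂ _
          exact (mul_le_mul hdual (mNorm_eBasis_le_one u₂ p₂ h₂ _) hnn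
            zero_le_one).trans_eq (one_mul 1)
      _ = (n : ℝ) := by simp
  have hbdd : BddBelow Nucset := ⟨(n : ℝ), fun cc hcc => key cc hcc⟩
  have hle : nucNormIdM d j (mNorm d j u₁ p₁) (mNorm d j u₂ p₂) ≤ (n : ℝ) := by
    rw [nucNormIdM, ← hNuc]
    exact le_trans (csInf_le hbdd hmem) hupper
  have hge' : (n : ℝ) ≤ nucNormIdM d j (mNorm d j u₁ p₁) (mNorm d j u₂ p₂) := by
    rw [nucNormIdM, ← hNuc]
    exact le_csInf ⟨_, hmem⟩ key
  rw [← hncard]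
  exact le_antisymm hle hge'
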